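/- Let n = 5/2, q = 2, k < 0, and let c ∈ ℝ. Fix a sign ε ∈ {1, −1}. Then the function u(t,r) = ε·5(3(t+c) + r²)/(r(15(t+c) + r²)·√(−2k)) is a solution of the semilinear radial heat equation u_t = u_rr + (3/2) r⁻¹ u_r + k u³ on any open subset of {(t,r) : r > 0, 15(t+c) + r² ≠ 0}. -/

import Mathlib

noncomputable section

def pdt (u : ℝ × ℝ → ℝ) (p : ℝ × ℝ) : ℝ := deriv (fun s => u (s, p.2)) p.1

def pdr (u : ℝ × ℝ → ℝ) (p : ℝ × ℝ) : ℝ := deriv (fun s => u (p.1, s)) p.2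

def pdrr (u : ℝ × ℝ → ℝ) (p : ℝ × ℝ) : ℝ :=
  deriv (fun s => deriv (fun s' => u (p.1, s')) s) p.2

/-- The semilinear radial heat equation for `n = 5/2`, `q = 2`:
`u_t = u_rr + (3/2) r⁻¹ u_r + k u³`. -/
def HeatEqCubic (k : ℝ) (u : ℝ × ℝ → ℝ) (p : ℝ × ℝ) : Prop :=
  pdt u p = pdrr u p + (3 / 2) * (p.2)⁻¹ * pdr u p + k * u p ^ 3

/-- time derivative -/
lemma lemT (e A c : ℝ) (t r : ℝ) (hr : r ≠ 0) (hS : 15 * (t + c) + r ^ 2 ≠ 0)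
    (hA : A ≠ 0) :
    HasDerivAt (fun x => e * (5 * (3 * (x + c) + r ^ 2)) / (r * (15 * (x + c) + r ^ 2) * A))
      (-60 * e * r / (A * (15 * (t + c) + r ^ 2) ^ 2)) t := by
  have hnum : HasDerivAt (fun x => e * (5 * (3 * (x + c) + r ^ 2))) (e * (5 * (3 * 1))) t :=
    ((((hasDerivAt_id t).add_const c).const_mul 3).add_const (r ^ 2)).const_mul 5 |>.const_mul e
  have hden : HasDerivAt (fun x => r * (15 * (x + c) + r ^ 2) * A) (r * (15 * 1) * A) t :=
    ((((hasDerivAt_id t).add_const c).const_mul 15).add_const (r ^ 2)).const_mul r |>.mul_const A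
  have hd0 : r * (15 * (t + c) + r ^ 2) * A ≠ 0 := mul_ne_zero (mul_ne_zero hr hS) hA
  have H := hnum.fun_div hden hd0
  refine H.congr_deriv ?_
  field_simp
  ring

/-- first radial derivative -/
lemma lemR (e A c : ℝ) (t s : ℝ) (hs : s ≠ 0) (hS : 15 * (t + c) + s ^ 2 ≠ 0)
    (hA : A ≠ 0) :
    HasDerivAt (fun x => e * (5 * (3 * (t + c) + x ^ 2)) / (x * (15 * (t + c) + x ^ 2) * A))
      (e * (30 * (t + c) * s ^ 2 - 5 * s ^ 4 - 225 * (t + c) ^ 2)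
        / (s ^ 2 * (15 * (t + c) + s ^ 2) ^ 2 * A)) s := by
  have hnum : HasDerivAt (fun x => e * (5 * (3 * (t + c) + x ^ 2)))
      (e * (5 * ((2 : ℕ) * s ^ (2 - 1)))) s :=
    (((hasDerivAt_pow 2 s).const_add (3 * (t + c))).const_mul 5).const_mul e
  have hden : HasDerivAt (fun x => x * (15 * (t + c) + x ^ 2) * A)
      ((1 * (15 * (t + c) + s ^ 2) + s * ((2 : ℕ) * s ^ (2 - 1))) * A) s :=
    ((hasDerivAt_id s).mul ((hasDerivAt_pow 2 s).const_add (15 * (t + c)))).mul_const A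
  have hd0 : s * (15 * (t + c) + s ^ 2) * A ≠ 0 := mul_ne_zero (mul_ne_zero hs hS) hA
  have H := hnum.fun_div hden hd0
  refine H.congr_deriv ?_
  push_cast
  field_simp
  ring

set_option maxHeartbeats 1000000 in
/-- second radial derivative -/
lemma lemRR (e A c : ℝ) (t s : ℝ) (hs : s ≠ 0) (hS : 15 * (t + c) + s ^ 2 ≠ 0)
    (hA : A ≠ 0) :
    HasDerivAt (fun x => e * (30 * (t + c) * x ^ 2 - 5 * x ^ 4 - 225 * (t + c) ^ 2)
        / (x ^ 2 * (15 * (t + c) + x ^ 2) ^ 2 * A))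
      (e * (6750 * (t + c) ^ 3 + 1350 * (t + c) ^ 2 * s ^ 2 - 270 * (t + c) * s ^ 4 + 10 * s ^ 6)
        / (s ^ 3 * (15 * (t + c) + s ^ 2) ^ 3 * A)) s := by
  have hnum : HasDerivAt
      (fun x => e * (30 * (t + c) * x ^ 2 - 5 * x ^ 4 - 225 * (t + c) ^ 2))
      (e * ((30 * (t + c)) * ((2 : ℕ) * s ^ (2 - 1)) - 5 * ((4 : ℕ) * s ^ (4 - 1)))) s :=
    ((((hasDerivAt_pow 2 s).const_mul (30 * (t + c))).sub
      ((hasDerivAt_pow 4 s).const_mul 5)).sub_const (225 * (t + c) ^ 2)).const_mul e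
  have hden : HasDerivAt (fun x => x ^ 2 * (15 * (t + c) + x ^ 2) ^ 2 * A)
      (((2 : ℕ) * s ^ (2 - 1) * (15 * (t + c) + s ^ 2) ^ 2
        + s ^ 2 * ((2 : ℕ) * (15 * (t + c) + s ^ 2) ^ (2 - 1) * ((2 : ℕ) * s ^ (2 - 1)))) * A) s :=
    ((hasDerivAt_pow 2 s).mul
      (((hasDerivAt_pow 2 s).const_add (15 * (t + c))).pow 2)).mul_const A
  have hd0 : s ^ 2 * (15 * (t + c) + s ^ 2) ^ 2 * A ≠ 0 :=
    mul_ne_zero (mul_ne_zero (pow_ne_zero 2 hs) (pow_ne_zero 2 hS)) hA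
  have H := hnum.fun_div hden hd0
  refine H.congr_deriv ?_
  push_cast
  field_simp
  ring

set_option maxHeartbeats 1000000 in
/-- the similarity exact solution
`u = ε 5(3(t+c)+r²)/(r(15(t+c)+r²)√(-2k))` for `n = 5/2`, `q = 2`, `k < 0`. -/
theorem exact_solution_similarity_b (k c e : ℝ) (hk : k < 0) (he : e = 1 ∨ e = -1)
    (D : Set (ℝ × ℝ)) (hD : IsOpen D)
    (hDsub : D ⊆ {p : ℝ × ℝ | 0 < p.2 ∧ 15 * (p.1 + c) + p.2 ^ 2 ≠ 0}) :
    ∀ p ∈ D,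
      HeatEqCubic k (fun p : ℝ × ℝ =>
        e * (5 * (3 * (p.1 + c) + p.2 ^ 2))
          / (p.2 * (15 * (p.1 + c) + p.2 ^ 2) * Real.sqrt (-2 * k))) p := by
  intro p hp
  obtain ⟨hr0, hS⟩ := hDsub hp
  set A := Real.sqrt (-2 * k) with hAdef
  have hApos : 0 < A := Real.sqrt_pos.mpr (by linarith)
  have hA : A ≠ 0 := ne_of_gt hApos
  have hA2 : A ^ 2 = -2 * k := Real.sq_sqrt (by linarith)
  have hkA : k = -(A ^ 2) / 2 := by linarith
  have hr : p.2 ≠ 0 := ne_of_gt hr0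
  have he2 : e ^ 2 = 1 := by rcases he with h | h <;> rw [h] <;> norm_num
  -- t-derivative
  have hT : pdt (fun q : ℝ × ℝ =>
      e * (5 * (3 * (q.1 + c) + q.2 ^ 2)) / (q.2 * (15 * (q.1 + c) + q.2 ^ 2) * A)) p
      = -60 * e * p.2 / (A * (15 * (p.1 + c) + p.2 ^ 2) ^ 2) :=
    (lemT e A c p.1 p.2 hr hS hA).deriv
  -- r-derivative
  have hR : pdr (fun q : ℝ × ℝ =>
      e * (5 * (3 * (q.1 + c) + q.2 ^ 2)) / (q.2 * (15 * (q.1 + c) + q.2 ^ 2) * A)) p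
      = e * (30 * (p.1 + c) * p.2 ^ 2 - 5 * p.2 ^ 4 - 225 * (p.1 + c) ^ 2)
        / (p.2 ^ 2 * (15 * (p.1 + c) + p.2 ^ 2) ^ 2 * A) :=
    (lemR e A c p.1 p.2 hr hS hA).deriv
  -- second r-derivative
  have hnb : ∀ᶠ s in nhds p.2, (p.1, s) ∈ D := by
    have hcont : ContinuousAt (fun s : ℝ => (p.1, s)) p.2 :=
      (continuous_const.prodMk continuous_id).continuousAt
    exact hcont.preimage_mem_nhds (hD.mem_nhds hp)
  have hEq : (fun s => deriv (fun s' => e * (5 * (3 * (p.1 + c) + s' ^ 2))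
        / (s' * (15 * (p.1 + c) + s' ^ 2) * A)) s)
      =ᶠ[nhds p.2] (fun s => e * (30 * (p.1 + c) * s ^ 2 - 5 * s ^ 4 - 225 * (p.1 + c) ^ 2)
        / (s ^ 2 * (15 * (p.1 + c) + s ^ 2) ^ 2 * A)) := by
    filter_upwards [hnb] with s hsD
    obtain ⟨hs0, hsS⟩ := hDsub hsD
    exact (lemR e A c p.1 s (ne_of_gt hs0) hsS hA).deriv
  have hRR : pdrr (fun q : ℝ × ℝ =>
      e * (5 * (3 * (q.1 + c) + q.2 ^ 2)) / (q.2 * (15 * (q.1 + c) + q.2 ^ 2) * A)) p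
      = e * (6750 * (p.1 + c) ^ 3 + 1350 * (p.1 + c) ^ 2 * p.2 ^ 2
          - 270 * (p.1 + c) * p.2 ^ 4 + 10 * p.2 ^ 6)
        / (p.2 ^ 3 * (15 * (p.1 + c) + p.2 ^ 2) ^ 3 * A) := by
    unfold pdrr
    rw [hEq.deriv_eq]
    exact (lemRR e A c p.1 p.2 hr hS hA).deriv
  unfold HeatEqCubic
  rw [hT, hR, hRR]
  rw [hkA]
  rcases he with rfl | rfl <;>
  · field_simp
    ring
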